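/- Incompleteness of cost-LPR: let F = {x∨y∨b₁, ¬x∨b₂, ¬y∨b₃} with blocking variables b₁, b₂, b₃. Then cost(F) = 1, but no cost-LPR derivation from F contains a unit clause bᵢ for any i ∈ {1,2,3}; in particular the cost-LPR calculus (and hence the cost-BC calculus) cannot prove cost(F) ≥ 1. -/
import Mathlib


namespace PaperMaxSAT

/-- Variables are natural numbers. -/
abbrev Var := ℕ

/-- A literal is a variable together with a polarity. -/
abbrev Lit := Var × Bool

/-- Negation of a literal. -/
def negLit (l : Lit) : Lit := (l.1, !l.2)

/-- A clause is a finite set of literals. -/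
abbrev Clause := Finset Lit

/-- A CNF formula is a finite multiset of clauses. -/
abbrev CNF := Multiset Clause

/-- A tautological clause contains a literal together with its negation. -/
def isTaut (C : Clause) : Prop := ∃ l ∈ C, negLit l ∈ C

/-- The value of a substitution at a variable: a Boolean constant or a literal. -/
abbrev SubVal := Bool ⊕ Lit

/-- Negation on substitution values. -/
def negSV : SubVal → SubVal
  | .inl b => .inl !b
  | .inr l => .inr (negLit l)

/-- A substitution maps each variable to `0`, `1` or a literal. -/
abbrev Sub := Var → SubVal

/-- Applying a substitution to a literal, respecting `σ(¬x) = ¬σ(x)`. -/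
def appLit (σ : Sub) (l : Lit) : SubVal :=
  if l.2 then σ l.1 else negSV (σ l.1)

/-- The identity substitution. -/
def idSub : Sub := fun v => .inr (v, true)

/-- `σ(C) = 1` : some literal of `C` is mapped to true by `σ`. -/
def clauseTrue (σ : Sub) (C : Clause) : Prop := ∃ l ∈ C, appLit σ l = Sum.inl true

instance (σ : Sub) (C : Clause) : Decidable (clauseTrue σ C) := by
  unfold clauseTrue; infer_instance

/-- `C↾σ` : the clause whose literals are the images under `σ` of the literals
of `C` mapped to literals (literals mapped to `0` are dropped). -/
def restrictClause (σ : Sub) (C : Clause) : Clause :=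
  C.biUnion (fun l => match appLit σ l with
    | .inr m => {m}
    | _ => (∅ : Clause))

/-- `Γ↾σ` : restrict every clause of `Γ`; clauses mapped to `1` are removed. -/
def restrictCNF (σ : Sub) (Γ : CNF) : CNF :=
  (Γ.filter (fun C => ¬ clauseTrue σ C)).map (restrictClause σ)

/-- `σ ⊨ C` : `σ(C) = 1` or `σ(C)` is tautological. -/
def subSat (σ : Sub) (C : Clause) : Prop :=
  clauseTrue σ C ∨ isTaut (restrictClause σ C)

/-- The assignment `¬C`, setting all literals of `C` to false. -/
def negSub (C : Clause) : Sub := fun v =>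
  if (v, true) ∈ C then .inl false
  else if (v, false) ∈ C then .inl true
  else .inr (v, true)

/-- The substitution setting the literal `l` to true and touching nothing else. -/
def litSub (l : Lit) : Sub := fun v => if v = l.1 then .inl l.2 else .inr (v, true)

/-- Unit propagation derives the empty clause. -/
inductive UPFalse : CNF → Prop
  | empty {Γ : CNF} : (∅ : Clause) ∈ Γ → UPFalse Γ
  | step {Γ : CNF} (l : Lit) : ({l} : Clause) ∈ Γ →
      UPFalse (restrictCNF (litSub l) Γ) → UPFalse Γ

/-- The unit clauses `¬l` for `l ∈ C`. -/
def negUnits (C : Clause) : CNF := C.val.map (fun l => ({negLit l} : Clause))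

/-- `Γ ⊢₁ C` : unit propagation on `Γ↾¬C` produces the empty clause. -/
def UPimplies (Γ : CNF) (C : Clause) : Prop := UPFalse (Γ + negUnits C)

/-- `Γ ⊢₁ Δ` : `Γ ⊢₁ D` for every `D ∈ Δ`. -/
def UPimpliesAll (Γ Δ : CNF) : Prop := ∀ D ∈ Δ, UPimplies Γ D

/-- Total assignments. -/
abbrev TAssign := Var → Bool

/-- A total assignment satisfies a clause. -/
def satC (α : TAssign) (C : Clause) : Prop := ∃ l ∈ C, α l.1 = l.2

instance (α : TAssign) (C : Clause) : Decidable (satC α C) := by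
  unfold satC; infer_instance

/-- A total assignment satisfies a CNF. -/
def satCNF (α : TAssign) (Γ : CNF) : Prop := ∀ C ∈ Γ, satC α C

/-- `τ ∘ σ` : composition of a total assignment with a substitution. -/
def comp (τ : TAssign) (σ : Sub) : TAssign := fun v =>
  match σ v with
  | .inl b => b
  | .inr l => if l.2 then τ l.1 else !(τ l.1)

/-- `τ` extends the assignment `¬C`. -/
def extendsNeg (τ : TAssign) (C : Clause) : Prop := ∀ l ∈ C, τ l.1 = !l.2

/-- The cost of a total assignment w.r.t. a set `B` of blocking variables:
the number of blocking variables set to true. -/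
def cost (B : Finset Var) (α : TAssign) : ℕ := (B.filter (fun b => α b = true)).card

/-- The cost of a MaxSAT instance encoded with blocking variables `B`:
the minimum cost of a satisfying total assignment. -/
noncomputable def costCNF (B : Finset Var) (Γ : CNF) : ℕ :=
  sInf {k | ∃ α : TAssign, satCNF α Γ ∧ cost B α = k}

/-- `σ` witnesses that `C` is cost-SR w.r.t. `Γ` (with blocking variables `B`):
the redundancy condition `Γ↾¬C ⊢₁ (Γ ∪ {C})↾σ` and the cost condition. -/
def CostSRwit (B : Finset Var) (Γ : CNF) (C : Clause) (σ : Sub) : Prop :=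
  UPimpliesAll (restrictCNF (negSub C) Γ) (restrictCNF σ (C ::ₘ Γ)) ∧
  ∀ τ : TAssign, extendsNeg τ C → cost B (comp τ σ) ≤ cost B τ

/-- `C` is cost-SR w.r.t. `Γ`. -/
def CostSR (B : Finset Var) (Γ : CNF) (C : Clause) : Prop := ∃ σ, CostSRwit B Γ C σ

/-- A substitution which is an assignment: every value is `0`, `1`,
or the variable itself. -/
def isAssign (σ : Sub) : Prop :=
  ∀ v, σ v = .inl true ∨ σ v = .inl false ∨ σ v = .inr (v, true)

/-- The variables of a clause. -/
def varsClause (C : Clause) : Finset Var := C.image Prod.fst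

/-- The variables of a CNF. -/
def varsCNF (Γ : CNF) : Finset Var := (Γ.map varsClause).sup

/-- Membership in the domain of an assignment. -/
def subDom (σ : Sub) (v : Var) : Prop := ∃ b : Bool, σ v = .inl b

/-- `C` is cost-PR w.r.t. `Γ`: cost-SR witnessed by an assignment. -/
def CostPR (B : Finset Var) (Γ : CNF) (C : Clause) : Prop :=
  ∃ σ, CostSRwit B Γ C σ ∧ isAssign σ

/-- `C` is cost-SPR w.r.t. `Γ`: cost-SR witnessed by an assignment with
domain `dom(¬C) = Var(C)`. -/
def CostSPR (B : Finset Var) (Γ : CNF) (C : Clause) : Prop :=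
  ∃ σ, CostSRwit B Γ C σ ∧ isAssign σ ∧ (∀ v, subDom σ v ↔ v ∈ varsClause C)

/-- `C` is cost-LPR w.r.t. `Γ`: cost-SR witnessed by an assignment with
domain `dom(¬C)` differing from `¬C` on exactly one variable. -/
def CostLPR (B : Finset Var) (Γ : CNF) (C : Clause) : Prop :=
  ∃ σ, CostSRwit B Γ C σ ∧ isAssign σ ∧ (∀ v, subDom σ v ↔ v ∈ varsClause C) ∧
    ((varsClause C).filter (fun v => σ v ≠ negSub C v)).card = 1

/-- `D` is a resolvent of `E₁` and `E₂`. -/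
def resolvent (D E₁ E₂ : Clause) : Prop :=
  ∃ x : Var, (x, true) ∈ E₁ ∧ (x, false) ∈ E₂ ∧
    D = E₁.erase (x, true) ∪ E₂.erase (x, false)

/-- A derivation from `Γ` in the calculus with redundancy rule `Red`:
every clause of the list is in `Γ`, a weakening of an earlier clause,
a resolvent of two earlier clauses, or redundant (w.r.t. `Red`) relative to
`Γ` together with the earlier clauses, using no new variables. -/
def IsDeriv (Red : Finset Var → CNF → Clause → Prop) (B : Finset Var) (Γ : CNF)
    (L : List Clause) : Prop :=
  ∀ i, ∀ hi : i < L.length,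
    L[i] ∈ Γ ∨
    (∃ j, ∃ hj : j < i, L[j]'(hj.trans hi) ⊆ L[i]) ∨
    (∃ j k, ∃ hj : j < i, ∃ hk : k < i,
      resolvent L[i] (L[j]'(hj.trans hi)) (L[k]'(hk.trans hi))) ∨
    (Red B (Γ + (↑(L.take i) : CNF)) L[i] ∧ varsClause L[i] ⊆ varsCNF Γ)

/-- `C ∨ ℓ` is a cost blocked clause (cost-BC) w.r.t. `Γ` and `ℓ`. -/
def CostBC (B : Finset Var) (Γ : CNF) (C : Clause) (l : Lit) : Prop :=
  (∀ D ∈ Γ, negLit l ∈ D → isTaut (C ∪ D.erase (negLit l))) ∧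
  ¬(l.2 = true ∧ l.1 ∈ B)

/-- Hamming distance between two total assignments, over the variables in `V`. -/
def HD (V : Finset Var) (α β : TAssign) : ℕ := (V.filter (fun v => α v ≠ β v)).card

/-- `flip(C, σ) ≥ d` : some total assignment `τ` extending `¬C` has
Hamming distance (over `V`) at least `d` from `τ ∘ σ`. -/
def flipGE (V : Finset Var) (C : Clause) (σ : Sub) (d : ℕ) : Prop :=
  ∃ τ : TAssign, extendsNeg τ C ∧ d ≤ HD V τ (comp τ σ)


/-- The formula `F = {x∨y∨b₁, ¬x∨b₂, ¬y∨b₃}` with `x = 0`, `y = 1`,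
`b₁ = 2`, `b₂ = 3`, `b₃ = 4`. -/
def Fexample : CNF :=
  { ({(0, true), (1, true), (2, true)} : Clause),
    ({(0, false), (3, true)} : Clause),
    ({(1, false), (4, true)} : Clause) }

/-- The blocking variables `b₁, b₂, b₃` of `Fexample`. -/
def Bexample : Finset Var := {2, 3, 4}

/-! ### Auxiliary development -/

/-- Boolean evaluation of a substitution value under a total assignment. -/
def evalSV (α : TAssign) : SubVal → Bool
  | .inl b => b
  | .inr l => if l.2 then α l.1 else !(α l.1)

lemma comp_eq_evalSV (τ : TAssign) (σ : Sub) (v : Var) :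
    comp τ σ v = evalSV τ (σ v) := by
  unfold comp evalSV; cases σ v <;> rfl

lemma evalSV_negSV (α : TAssign) (s : SubVal) : evalSV α (negSV s) = !(evalSV α s) := by
  cases s with
  | inl b => rfl
  | inr l =>
    rcases l with ⟨x, p⟩
    cases p <;> simp [negSV, negLit, evalSV]

lemma comp_sat_lit (α : TAssign) (σ : Sub) (l : Lit) :
    (comp α σ l.1 = l.2) ↔ evalSV α (appLit σ l) = true := by
  rcases l with ⟨x, p⟩
  rw [comp_eq_evalSV]
  cases p
  · rw [show appLit σ (x, false) = negSV (σ x) from rfl, evalSV_negSV]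
    cases evalSV α (σ x) <;> simp
  · simp [appLit]

lemma mem_restrictClause {σ : Sub} {C : Clause} {m : Lit} :
    m ∈ restrictClause σ C ↔ ∃ l ∈ C, appLit σ l = .inr m := by
  unfold restrictClause
  rw [Finset.mem_biUnion]
  constructor
  · rintro ⟨l, hl, hm⟩
    refine ⟨l, hl, ?_⟩
    rcases h : appLit σ l with b | m' <;> rw [h] at hm <;> simp_all
  · rintro ⟨l, hl, hm⟩
    exact ⟨l, hl, by rw [hm]; simp⟩

lemma satC_comp (α : TAssign) (σ : Sub) (C : Clause) :
    satC (comp α σ) C ↔ (clauseTrue σ C ∨ satC α (restrictClause σ C)) := by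
  constructor
  · rintro ⟨l, hl, hsat⟩
    rw [comp_sat_lit] at hsat
    rcases h : appLit σ l with b | m
    · left; exact ⟨l, hl, by rw [h] at hsat ⊢; simp [evalSV] at hsat; rw [hsat]⟩
    · right
      refine ⟨m, mem_restrictClause.2 ⟨l, hl, h⟩, ?_⟩
      rw [h] at hsat
      rcases m with ⟨y, q⟩
      cases q <;> simp [evalSV] at hsat <;> simp [hsat]
  · rintro (⟨l, hl, h⟩ | ⟨m, hm, hsat⟩)
    · exact ⟨l, hl, by rw [comp_sat_lit, h]; rfl⟩
    · rcases mem_restrictClause.1 hm with ⟨l, hl, h⟩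
      refine ⟨l, hl, ?_⟩
      rw [comp_sat_lit, h]
      rcases m with ⟨y, q⟩
      cases q <;> simp [evalSV] at hsat ⊢ <;> simp [hsat]

lemma mem_restrictCNF {σ : Sub} {Γ : CNF} {D : Clause} :
    D ∈ restrictCNF σ Γ ↔ ∃ C ∈ Γ, ¬ clauseTrue σ C ∧ restrictClause σ C = D := by
  unfold restrictCNF
  rw [Multiset.mem_map]
  constructor
  · rintro ⟨C, hC, rfl⟩
    rcases Multiset.mem_filter.1 hC with ⟨h1, h2⟩
    exact ⟨C, h1, h2, rfl⟩
  · rintro ⟨C, h1, h2, rfl⟩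
    exact ⟨C, Multiset.mem_filter.2 ⟨h1, h2⟩, rfl⟩

lemma satCNF_comp (α : TAssign) (σ : Sub) (Γ : CNF) :
    satCNF (comp α σ) Γ ↔ satCNF α (restrictCNF σ Γ) := by
  constructor
  · intro h D hD
    rcases mem_restrictCNF.1 hD with ⟨C, hC, hnt, rfl⟩
    rcases (satC_comp α σ C).1 (h C hC) with h' | h'
    · exact absurd h' hnt
    · exact h'
  · intro h C hC
    rw [satC_comp]
    by_cases hnt : clauseTrue σ C
    · exact Or.inl hnt
    · exact Or.inr (h _ (mem_restrictCNF.2 ⟨C, hC, hnt, rfl⟩))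

lemma comp_litSub {α : TAssign} {l : Lit} (h : α l.1 = l.2) :
    comp α (litSub l) = α := by
  funext v
  rw [comp_eq_evalSV]
  unfold litSub
  by_cases hv : v = l.1 <;> simp [hv, evalSV]
  rcases l with ⟨x, p⟩
  cases p <;> simp_all [evalSV]

lemma UPFalse_sound {Γ : CNF} (h : UPFalse Γ) : ∀ α : TAssign, ¬ satCNF α Γ := by
  induction h with
  | empty hmem =>
    intro α hα
    rcases hα _ hmem with ⟨l, hl, _⟩
    exact absurd hl (by simp)
  | step l hmem _ ih =>
    intro α hα
    rcases hα _ hmem with ⟨l', hl', hsat⟩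
    rw [Finset.mem_singleton] at hl'
    subst hl'
    exact ih α (by rw [← satCNF_comp, comp_litSub hsat]; exact hα)

lemma satCNF_negUnits {α : TAssign} {C : Clause} :
    satCNF α (negUnits C) ↔ extendsNeg α C := by
  constructor
  · intro h l hl
    rcases h ({negLit l}) (Multiset.mem_map.2 ⟨l, hl, rfl⟩) with ⟨m, hm, hsat⟩
    rw [Finset.mem_singleton] at hm; subst hm
    exact hsat
  · intro h D hD
    rcases Multiset.mem_map.1 hD with ⟨l, hl, rfl⟩
    exact ⟨negLit l, Finset.mem_singleton_self _, h l hl⟩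

lemma satC_of_total {α : TAssign} {C : Clause} (h : ¬ extendsNeg α C) : satC α C := by
  by_contra hs
  apply h
  intro l hl
  by_contra hne
  exact hs ⟨l, hl, by cases hb : α l.1 <;> cases hp : l.2 <;> simp_all⟩

lemma UPimplies_sound {Γ : CNF} {D : Clause} (h : UPimplies Γ D) {α : TAssign}
    (hα : satCNF α Γ) : satC α D := by
  apply satC_of_total
  intro hext
  apply UPFalse_sound h α
  intro C hC
  rcases Multiset.mem_add.1 hC with h1 | h1
  · exact hα C h1
  · exact (satCNF_negUnits.2 hext) C h1

lemma comp_negSub {α : TAssign} {C : Clause} (h : extendsNeg α C) :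
    comp α (negSub C) = α := by
  funext v
  rw [comp_eq_evalSV]
  unfold negSub
  by_cases h1 : (v, true) ∈ C
  · simpa [h1, evalSV] using (h _ h1).symm
  · by_cases h2 : (v, false) ∈ C
    · simpa [h1, h2, evalSV] using (h _ h2).symm
    · simp [h1, h2, evalSV]

/-- Semantic content of the cost-SR conditions. -/
lemma CostSRwit_sound {B : Finset Var} {Γ : CNF} {C : Clause} {σ : Sub}
    (hw : CostSRwit B Γ C σ) {α : TAssign} (hΓ : satCNF α Γ) (hext : extendsNeg α C) :
    satCNF (comp α σ) (C ::ₘ Γ) ∧ cost B (comp α σ) ≤ cost B α := by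
  have hΓ' : satCNF α (restrictCNF (negSub C) Γ) := by
    rw [← satCNF_comp, comp_negSub hext]; exact hΓ
  refine ⟨?_, hw.2 α hext⟩
  rw [satCNF_comp]
  intro D hD
  exact UPimplies_sound (hw.1 D hD) hΓ'

lemma negSub_eq_of_mem {C : Clause} {α : TAssign} (hext : extendsNeg α C) {v : Var}
    (hv : v ∈ varsClause C) : negSub C v = .inl (α v) := by
  rcases Finset.mem_image.1 hv with ⟨l, hl, rfl⟩
  unfold negSub
  by_cases h1 : (l.1, true) ∈ C
  · simp [h1, (hext _ h1 : α l.1 = !true)]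
  · have h2 : (l.1, false) ∈ C := by
      rcases l with ⟨x, p⟩
      cases p
      · exact hl
      · exact absurd hl h1
    simp [h1, h2, (hext _ h2 : α l.1 = !false)]

/-- The LPR structural condition: `comp α σ` is `α` with exactly one flipped variable. -/
lemma lpr_flip {C : Clause} {σ : Sub} (hA : isAssign σ)
    (hdom : ∀ v, subDom σ v ↔ v ∈ varsClause C)
    (hcard : ((varsClause C).filter (fun v => σ v ≠ negSub C v)).card = 1)
    {α : TAssign} (hext : extendsNeg α C) :
    ∃ v₀ ∈ varsClause C, comp α σ = Function.update α v₀ (!(α v₀)) := by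
  rcases Finset.card_eq_one.1 hcard with ⟨v₀, hv₀⟩
  have hv₀mem : v₀ ∈ (varsClause C).filter (fun v => σ v ≠ negSub C v) := by
    rw [hv₀]; exact Finset.mem_singleton_self _
  rcases Finset.mem_filter.1 hv₀mem with ⟨hv₀C, hv₀ne⟩
  refine ⟨v₀, hv₀C, ?_⟩
  funext v
  rw [comp_eq_evalSV]
  by_cases hv : v = v₀
  · subst hv
    have hd : subDom σ v := (hdom v).2 hv₀C
    rcases hd with ⟨b, hb⟩
    have : negSub C v = .inl (α v) := negSub_eq_of_mem hext hv₀C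
    rw [hb, this] at hv₀ne
    have hbv : b = !(α v) := by
      cases b <;> cases h : α v <;> simp_all
    rw [hb, hbv, Function.update_self]
    rfl
  · rw [Function.update_of_ne hv]
    by_cases hvC : v ∈ varsClause C
    · have : σ v = negSub C v := by
        by_contra hne
        have : v ∈ ({v₀} : Finset Var) := by
          rw [← hv₀]; exact Finset.mem_filter.2 ⟨hvC, hne⟩
        exact hv (Finset.mem_singleton.1 this)
      rw [this, negSub_eq_of_mem hext hvC]
      rfl
    · have hnd : ¬ subDom σ v := fun hd => hvC ((hdom v).1 hd)
      rcases hA v with h | h | h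
      · exact absurd ⟨true, h⟩ hnd
      · exact absurd ⟨false, h⟩ hnd
      · rw [h]; simp [evalSV]

instance (α : TAssign) (Γ : CNF) : Decidable (satCNF α Γ) := by
  unfold satCNF; infer_instance

/-! ### The example -/

def a1 : TAssign := fun v => v == 0 || v == 3
def a2 : TAssign := fun v => v == 1 || v == 4
def a3 : TAssign := fun v => v == 2

lemma good_F (a : TAssign) (ha : a = a1 ∨ a = a2 ∨ a = a3) : satCNF a Fexample := by
  rcases ha with rfl | rfl | rfl <;> decide

lemma cost_a (a : TAssign) (ha : a = a1 ∨ a = a2 ∨ a = a3) : cost Bexample a = 1 := by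
  rcases ha with rfl | rfl | rfl <;> decide

lemma vars_F : varsCNF Fexample = {0, 1, 2, 3, 4} := by decide

lemma flip_bad (a : TAssign) (ha : a = a1 ∨ a = a2 ∨ a = a3) (v₀ : Var)
    (hv : v₀ ∈ ({0, 1, 2, 3, 4} : Finset Var)) :
    ¬ (satCNF (Function.update a v₀ (!(a v₀))) Fexample ∧
        cost Bexample (Function.update a v₀ (!(a v₀))) ≤ 1) := by
  fin_cases hv <;> rcases ha with rfl | rfl | rfl <;> decide

lemma satC_mono {α : TAssign} {C D : Clause} (h : C ⊆ D) (hs : satC α C) : satC α D := by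
  rcases hs with ⟨l, hl, hv⟩; exact ⟨l, h hl, hv⟩

lemma satC_resolvent {α : TAssign} {D E₁ E₂ : Clause} (h : resolvent D E₁ E₂)
    (h1 : satC α E₁) (h2 : satC α E₂) : satC α D := by
  rcases h with ⟨x, hx1, hx2, rfl⟩
  cases hx : α x
  · rcases h1 with ⟨l, hl, hv⟩
    have hne : l ≠ (x, true) := by rintro rfl; simp_all
    exact ⟨l, Finset.mem_union_left _ (Finset.mem_erase.2 ⟨hne, hl⟩), hv⟩
  · rcases h2 with ⟨l, hl, hv⟩
    have hne : l ≠ (x, false) := by rintro rfl; simp_all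
    exact ⟨l, Finset.mem_union_right _ (Finset.mem_erase.2 ⟨hne, hl⟩), hv⟩

theorem costLPR_incomplete' :
    costCNF Bexample Fexample = 1 ∧
    ∀ L : List Clause, IsDeriv CostLPR Bexample Fexample L →
      ∀ b ∈ Bexample, ({(b, true)} : Clause) ∉ L := by
  constructor
  · have h1 : (1 : ℕ) ∈ {k | ∃ α : TAssign, satCNF α Fexample ∧ cost Bexample α = k} :=
      ⟨a3, by decide, by decide⟩
    have h0 : (0 : ℕ) ∉ {k | ∃ α : TAssign, satCNF α Fexample ∧ cost Bexample α = k} := by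
      rintro ⟨α, hsat, hcost⟩
      have hf : Bexample.filter (fun b => α b = true) = ∅ := Finset.card_eq_zero.1 hcost
      have hb : ∀ b ∈ Bexample, α b = false := by
        intro b hbB
        have := Finset.filter_eq_empty_iff.1 hf hbB
        simpa using this
      have h2 : α 2 = false := hb 2 (by decide)
      have h3 : α 3 = false := hb 3 (by decide)
      have h4 : α 4 = false := hb 4 (by decide)
      have hx : α 0 = false := by
        rcases hsat ({(0, false), (3, true)} : Clause) (by decide) with ⟨l, hl, hv⟩
        simp only [Finset.mem_insert, Finset.mem_singleton] at hl
        rcases hl with rfl | rfl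
        · exact hv
        · simp_all
      have hy : α 1 = false := by
        rcases hsat ({(1, false), (4, true)} : Clause) (by decide) with ⟨l, hl, hv⟩
        simp only [Finset.mem_insert, Finset.mem_singleton] at hl
        rcases hl with rfl | rfl
        · exact hv
        · simp_all
      rcases hsat ({(0, true), (1, true), (2, true)} : Clause) (by decide) with ⟨l, hl, hv⟩
      simp only [Finset.mem_insert, Finset.mem_singleton] at hl
      rcases hl with rfl | rfl | rfl <;> simp_all
    have hne : ({k | ∃ α : TAssign, satCNF α Fexample ∧ cost Bexample α = k}).Nonempty :=
      ⟨1, h1⟩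
    have hmem := Nat.sInf_mem hne
    have hle : costCNF Bexample Fexample ≤ 1 := Nat.sInf_le h1
    have hne0 : costCNF Bexample Fexample ≠ 0 := fun h => h0 (h ▸ hmem)
    omega
  · intro L hL b hbB hbL
    have inv : ∀ i, ∀ hi : i < L.length,
        satC a1 L[i] ∧ satC a2 L[i] ∧ satC a3 L[i] := by
      intro i
      induction i using Nat.strong_induction_on with
      | _ i ih =>
        intro hi
        rcases hL i hi with hF | ⟨j, hj, hsub⟩ | ⟨j, k, hj, hk, hres⟩ |
          ⟨⟨σ, hwit, hass, hdom, hcard⟩, hvars⟩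
        · have : L[i] = ({(0, true), (1, true), (2, true)} : Clause) ∨
              L[i] = ({(0, false), (3, true)} : Clause) ∨
              L[i] = ({(1, false), (4, true)} : Clause) := by
            simpa [Fexample] using hF
          rcases this with h | h | h <;> rw [h] <;> exact ⟨by decide, by decide, by decide⟩
        · have := ih j hj (hj.trans hi)
          exact ⟨satC_mono hsub this.1, satC_mono hsub this.2.1, satC_mono hsub this.2.2⟩
        · have hJ := ih j hj (hj.trans hi)
          have hK := ih k hk (hk.trans hi)
          exact ⟨satC_resolvent hres hJ.1 hK.1, satC_resolvent hres hJ.2.1 hK.2.1,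
            satC_resolvent hres hJ.2.2 hK.2.2⟩
        · have hgood : ∀ a : TAssign, (a = a1 ∨ a = a2 ∨ a = a3) → satC a L[i] := by
            intro a ha
            by_contra hns
            have hext : extendsNeg a L[i] := by
              by_contra h
              exact hns (satC_of_total h)
            have hΓ : satCNF a (Fexample + ↑(L.take i)) := by
              intro C hC
              rcases Multiset.mem_add.1 hC with h | h
              · exact good_F a ha C h
              · have h' : C ∈ L.take i := by exact_mod_cast h
                rcases List.mem_iff_getElem.1 h' with ⟨m, hm, hEq⟩
                have hmi : m < i := lt_of_lt_of_le hm (by simp [List.length_take])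
                have hG := ih m hmi (hmi.trans hi)
                rw [List.getElem_take] at hEq
                rw [← hEq]
                rcases ha with rfl | rfl | rfl
                exacts [hG.1, hG.2.1, hG.2.2]
            obtain ⟨hsat', hcost'⟩ := CostSRwit_sound hwit hΓ hext
            obtain ⟨v₀, hv₀C, hflip⟩ := lpr_flip hass hdom hcard hext
            have hv₀ : v₀ ∈ ({0, 1, 2, 3, 4} : Finset Var) := by
              rw [← vars_F]; exact hvars hv₀C
            apply flip_bad a ha v₀ hv₀
            rw [← hflip]
            constructor
            · intro C hC
              exact hsat' C (Multiset.mem_cons_of_mem (Multiset.mem_add.2 (Or.inl hC)))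
            · calc cost Bexample (comp a σ) ≤ cost Bexample a := hcost'
                _ = 1 := cost_a a ha
          exact ⟨hgood a1 (Or.inl rfl), hgood a2 (Or.inr (Or.inl rfl)),
            hgood a3 (Or.inr (Or.inr rfl))⟩
    rcases List.mem_iff_getElem.1 hbL with ⟨i, hi, hEq⟩
    have hG := inv i hi
    rw [hEq] at hG
    have hb' : b = 2 ∨ b = 3 ∨ b = 4 := by simpa [Bexample] using hbB
    rcases hb' with rfl | rfl | rfl
    · exact absurd hG.1 (by decide)
    · exact absurd hG.2.1 (by decide)
    · exact absurd hG.1 (by decide)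

/-- incompleteness of cost-LPR: `cost(F) = 1`, but no cost-LPR
derivation from `F` contains a unit clause `bᵢ` for any blocking variable;
in particular cost-LPR (hence cost-BC) cannot prove `cost(F) ≥ 1`. -/
theorem costLPR_incomplete :
    costCNF Bexample Fexample = 1 ∧
    ∀ L : List Clause, IsDeriv CostLPR Bexample Fexample L →
      ∀ b ∈ Bexample, ({(b, true)} : Clause) ∉ L :=
  costLPR_incomplete'

end PaperMaxSAT
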